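/- Suppose y = Φ x_true + n with ‖n‖₂ ≤ ε, where x_true ∈ {0,1}^N is binary with exactly s nonzero entries, and Φ satisfies the bounded restricted isometry property of order 2s with constant δ_{2s}^b < √2 - 1. Let x* be any optimal solution of the convex program: minimize ‖x‖₁ subject to ‖Φx - y‖₂ ≤ ε and 0 ≤ x ≤ 1 componentwise. Then ‖x* - x_true‖₂ ≤ (4√(1+δ_{2s}^b) / (1 - (√2+1)δ_{2s}^b)) · ε. -/

import Mathlib

noncomputable def l2 {n : ℕ} (x : Fin n → ℝ) : ℝ := Real.sqrt (∑ i, (x i) ^ 2)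
def l1 {n : ℕ} (x : Fin n → ℝ) : ℝ := ∑ i, |x i|

open Finset

namespace CSaux

variable {n : ℕ}

def ip (u v : Fin n → ℝ) : ℝ := ∑ i, u i * v i

lemma l2_nonneg (v : Fin n → ℝ) : 0 ≤ l2 v := Real.sqrt_nonneg _

lemma l2_sq (v : Fin n → ℝ) : l2 v ^ 2 = ∑ i, v i ^ 2 :=
  Real.sq_sqrt (by positivity)

lemma ip_self (v : Fin n → ℝ) : ip v v = l2 v ^ 2 := by
  rw [l2_sq]; unfold ip; simp [sq]

lemma abs_ip_le (u v : Fin n → ℝ) : |ip u v| ≤ l2 u * l2 v := by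
  have h := sum_mul_sq_le_sq_mul_sq Finset.univ u v
  have h2 : (l2 u * l2 v) ^ 2 = (∑ i, u i ^ 2) * ∑ i, v i ^ 2 := by
    rw [mul_pow, l2_sq, l2_sq]
  have hnn : 0 ≤ l2 u * l2 v := mul_nonneg (l2_nonneg u) (l2_nonneg v)
  have h3 : ip u v = ∑ i, u i * v i := rfl
  rw [← Real.sqrt_sq hnn, ← Real.sqrt_sq_eq_abs]
  have h4 : ip u v ^ 2 = (∑ i, u i * v i) ^ 2 := by rw [h3]
  apply Real.sqrt_le_sqrt; linarith

lemma ip_le (u v : Fin n → ℝ) : ip u v ≤ l2 u * l2 v :=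
  le_trans (le_abs_self _) (abs_ip_le u v)

lemma l2_sq_add (u v : Fin n → ℝ) : l2 (u + v) ^ 2 = l2 u ^ 2 + 2 * ip u v + l2 v ^ 2 := by
  rw [l2_sq, l2_sq, l2_sq]; unfold ip
  rw [Finset.mul_sum, ← Finset.sum_add_distrib, ← Finset.sum_add_distrib]
  apply Finset.sum_congr rfl; intro i _
  simp only [Pi.add_apply]; ring

lemma l2_add_le (u v : Fin n → ℝ) : l2 (u + v) ≤ l2 u + l2 v := by
  have h1 : l2 (u + v) ^ 2 ≤ (l2 u + l2 v) ^ 2 := by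
    rw [l2_sq_add]; nlinarith [ip_le u v]
  have h2 : 0 ≤ l2 u + l2 v := add_nonneg (l2_nonneg u) (l2_nonneg v)
  nlinarith [l2_nonneg (u+v)]

lemma l2_sum_le {m : ℕ} (f : ℕ → Fin n → ℝ) :
    l2 (∑ j ∈ Finset.range m, f j) ≤ ∑ j ∈ Finset.range m, l2 (f j) := by
  induction m with
  | zero => simp [l2]
  | succ m ih =>
      rw [Finset.sum_range_succ, Finset.sum_range_succ]
      exact le_trans (l2_add_le _ _) (by linarith)

lemma l2_neg (v : Fin n → ℝ) : l2 (-v) = l2 v := by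
  unfold l2; congr 1; apply Finset.sum_congr rfl; intro i _; simp

end CSaux

namespace CSaux

variable {N : ℕ}

def restr (T : Finset (Fin N)) (h : Fin N → ℝ) : Fin N → ℝ :=
  fun i => if i ∈ T then h i else 0

lemma restr_apply (T : Finset (Fin N)) (h : Fin N → ℝ) (i : Fin N) :
    restr T h i = if i ∈ T then h i else 0 := rfl

lemma l2_sq_restr (T : Finset (Fin N)) (h : Fin N → ℝ) :
    l2 (restr T h) ^ 2 = ∑ i ∈ T, h i ^ 2 := by
  rw [l2_sq]
  rw [← Finset.sum_filter_add_sum_filter_not Finset.univ (· ∈ T)]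
  have h1 : ∀ i ∈ Finset.univ.filter (· ∈ T), restr T h i ^ 2 = h i ^ 2 := by
    intro i hi; simp at hi; simp [restr, hi]
  have h2 : ∀ i ∈ Finset.univ.filter (¬ · ∈ T), restr T h i ^ 2 = 0 := by
    intro i hi; simp at hi; simp [restr, hi]
  rw [Finset.sum_congr rfl h1, Finset.sum_congr rfl h2, Finset.sum_const_zero, add_zero]
  congr 1; ext i; simp

lemma supp_restr (T : Finset (Fin N)) (h : Fin N → ℝ) :
    Set.ncard (Function.support (restr T h)) ≤ T.card := by
  have hsub : Function.support (restr T h) ⊆ ↑T := by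
    intro i hi
    by_contra hc
    simp at hc
    exact hi (by simp [restr, hc])
  calc Set.ncard (Function.support (restr T h)) ≤ Set.ncard (↑T : Set (Fin N)) :=
        Set.ncard_le_ncard hsub (Set.toFinite _)
    _ = T.card := Set.ncard_coe_finset T

lemma l2_smul (c : ℝ) (v : Fin N → ℝ) : l2 (c • v) = |c| * l2 v := by
  unfold l2
  rw [← Real.sqrt_sq_eq_abs, ← Real.sqrt_mul (sq_nonneg c), Finset.mul_sum]
  congr 1; apply Finset.sum_congr rfl; intro i _; simp [mul_pow]

lemma ip_smul (c d : ℝ) (u v : Fin N → ℝ) : ip (c • u) (d • v) = c * d * ip u v := by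
  unfold ip; rw [Finset.mul_sum]; apply Finset.sum_congr rfl; intro i _; simp; ring

lemma l2_sq_sub (u v : Fin N → ℝ) : l2 (u - v) ^ 2 = l2 u ^ 2 - 2 * ip u v + l2 v ^ 2 := by
  have := l2_sq_add u (-v)
  have hneg : ip u (-v) = - ip u v := by unfold ip; rw [← Finset.sum_neg_distrib]; apply Finset.sum_congr rfl; intro i _; simp
  have hn2 : l2 (-v) = l2 v := l2_neg v
  rw [sub_eq_add_neg]; rw [this, hneg, hn2]; ring

lemma l2_eq_zero {v : Fin N → ℝ} (h : l2 v = 0) : v = 0 := by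
  have h1 : ∑ i, v i ^ 2 = 0 := by rw [← l2_sq, h]; ring
  funext i
  have := (Finset.sum_eq_zero_iff_of_nonneg (fun i _ => sq_nonneg (v i))).mp h1 i (Finset.mem_univ i)
  exact pow_eq_zero_iff (by norm_num) |>.mp this

end CSaux

namespace CSaux

lemma supp_card_le {N : ℕ} (T : Finset (Fin N)) (w : Fin N → ℝ) (hw : ∀ i ∉ T, w i = 0) :
    Set.ncard (Function.support w) ≤ T.card := by
  have hsub : Function.support w ⊆ ↑T := by
    intro i hi
    by_contra hc
    simp at hc
    exact hi (hw i hc)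
  calc Set.ncard (Function.support w) ≤ Set.ncard (↑T : Set (Fin N)) :=
        Set.ncard_le_ncard hsub (Set.toFinite _)
    _ = T.card := Set.ncard_coe_finset T

lemma entry_le_l2 {N : ℕ} (u : Fin N → ℝ) (i : Fin N) : |u i| ≤ l2 u := by
  rw [← Real.sqrt_sq_eq_abs]
  apply Real.sqrt_le_sqrt
  exact Finset.single_le_sum (f := fun j => u j ^ 2) (fun j _ => sq_nonneg _) (Finset.mem_univ i)

lemma ro {M N s : ℕ} (Φ : Matrix (Fin M) (Fin N) ℝ) (δ : ℝ)
    (hBRIP : ∀ v : Fin N → ℝ, Set.ncard (Function.support v) ≤ 2 * s → (∀ i, |v i| ≤ 1) →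
      (1 - δ) * (l2 v) ^ 2 ≤ (l2 (Φ.mulVec v)) ^ 2 ∧
      (l2 (Φ.mulVec v)) ^ 2 ≤ (1 + δ) * (l2 v) ^ 2)
    (A B : Finset (Fin N)) (hd : Disjoint A B) (hcard : A.card + B.card ≤ 2 * s)
    (u v : Fin N → ℝ) (hu : ∀ i ∉ A, u i = 0) (hv : ∀ i ∉ B, v i = 0) :
    |ip (Φ.mulVec u) (Φ.mulVec v)| ≤ δ * (l2 u * l2 v) := by
  rcases eq_or_lt_of_le (l2_nonneg u) with h0 | ha
  · have : u = 0 := l2_eq_zero h0.symm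
    subst this
    rw [Matrix.mulVec_zero]
    have : ip (0 : Fin M → ℝ) (Φ.mulVec v) = 0 := by unfold ip; simp
    rw [this, ← h0]; simp
  rcases eq_or_lt_of_le (l2_nonneg v) with h0 | hb
  · have : v = 0 := l2_eq_zero h0.symm
    subst this
    rw [Matrix.mulVec_zero]
    have : ip (Φ.mulVec u) (0 : Fin M → ℝ) = 0 := by unfold ip; simp
    rw [this, ← h0]; simp
  set a := l2 u with hadef
  set b := l2 v with hbdef
  set u' := a⁻¹ • u with hu'def
  set v' := b⁻¹ • v with hv'def
  -- entries of u', v' bounded by 1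
  have hu'bd : ∀ i, |u' i| ≤ 1 := by
    intro i
    rw [hu'def]
    simp only [Pi.smul_apply, smul_eq_mul, abs_mul, abs_inv, abs_of_pos ha]
    rw [inv_mul_le_iff₀ ha, mul_one]
    exact entry_le_l2 u i
  have hv'bd : ∀ i, |v' i| ≤ 1 := by
    intro i
    rw [hv'def]
    simp only [Pi.smul_apply, smul_eq_mul, abs_mul, abs_inv, abs_of_pos hb]
    rw [inv_mul_le_iff₀ hb, mul_one]
    exact entry_le_l2 v i
  have hu'supp : ∀ i ∉ A, u' i = 0 := by
    intro i hi; rw [hu'def]; simp [hu i hi]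
  have hv'supp : ∀ i ∉ B, v' i = 0 := by
    intro i hi; rw [hv'def]; simp [hv i hi]
  -- norms of u', v' equal 1
  have hl2u' : l2 u' = 1 := by
    rw [hu'def, l2_smul, abs_inv, abs_of_pos ha, inv_mul_cancel₀ (ne_of_gt ha)]
  have hl2v' : l2 v' = 1 := by
    rw [hv'def, l2_smul, abs_inv, abs_of_pos hb, inv_mul_cancel₀ (ne_of_gt hb)]
  -- ip u' v' = 0
  have hipz : ip u' v' = 0 := by
    unfold ip
    apply Finset.sum_eq_zero
    intro i _
    by_cases hiA : i ∈ A
    · have : i ∉ B := fun hB => (Finset.disjoint_left.mp hd hiA) hB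
      rw [hv'supp i this, mul_zero]
    · rw [hu'supp i hiA, zero_mul]
  -- BRIP hypotheses for u' ± v'
  have key : ∀ (w : Fin N → ℝ), w = u' + v' ∨ w = u' - v' →
      Set.ncard (Function.support w) ≤ 2 * s ∧ (∀ i, |w i| ≤ 1) ∧ l2 w ^ 2 = 2 := by
    intro w hw
    have hsupp : ∀ i ∉ A ∪ B, w i = 0 := by
      intro i hi
      rw [Finset.mem_union] at hi
      push_neg at hi
      rcases hw with rfl | rfl <;>
        simp [Pi.add_apply, Pi.sub_apply, hu'supp i hi.1, hv'supp i hi.2]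
    refine ⟨le_trans (supp_card_le _ _ hsupp) (le_trans (Finset.card_union_le A B) hcard), ?_, ?_⟩
    · intro i
      by_cases hiA : i ∈ A
      · have hiB : i ∉ B := fun hB => (Finset.disjoint_left.mp hd hiA) hB
        rcases hw with rfl | rfl <;>
          simp only [Pi.add_apply, Pi.sub_apply, hv'supp i hiB, add_zero, sub_zero] <;>
          exact hu'bd i
      · rcases hw with rfl | rfl <;>
          simp only [Pi.add_apply, Pi.sub_apply, hu'supp i hiA, zero_add, zero_sub, abs_neg] <;>
          exact hv'bd i
    · rcases hw with rfl | rfl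
      · rw [l2_sq_add, hipz, hl2u', hl2v']; ring
      · rw [l2_sq_sub, hipz, hl2u', hl2v']; ring
  obtain ⟨hs1, hb1, hn1⟩ := key (u' + v') (Or.inl rfl)
  obtain ⟨hs2, hb2, hn2⟩ := key (u' - v') (Or.inr rfl)
  have B1 := hBRIP (u' + v') hs1 hb1
  have B2 := hBRIP (u' - v') hs2 hb2
  rw [hn1] at B1
  rw [hn2] at B2
  -- polarization
  have hpol : ip (Φ.mulVec u') (Φ.mulVec v')
      = (l2 (Φ.mulVec (u' + v')) ^ 2 - l2 (Φ.mulVec (u' - v')) ^ 2) / 4 := by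
    rw [Matrix.mulVec_add, Matrix.mulVec_sub, l2_sq_add, l2_sq_sub]
    ring
  have hip' : |ip (Φ.mulVec u') (Φ.mulVec v')| ≤ δ := by
    rw [abs_le]
    constructor
    · rw [hpol]; linarith [B1.1, B2.2]
    · rw [hpol]; linarith [B1.2, B2.1]
  -- scale back
  have hscale : ip (Φ.mulVec u) (Φ.mulVec v) = a * b * ip (Φ.mulVec u') (Φ.mulVec v') := by
    have h1 : Φ.mulVec u' = a⁻¹ • Φ.mulVec u := by rw [hu'def, Matrix.mulVec_smul]
    have h2 : Φ.mulVec v' = b⁻¹ • Φ.mulVec v := by rw [hv'def, Matrix.mulVec_smul]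
    rw [h1, h2, ip_smul]
    field_simp
  rw [hscale, abs_mul, abs_mul, abs_of_pos ha, abs_of_pos hb]
  calc a * b * |ip (Φ.mulVec u') (Φ.mulVec v')| ≤ a * b * δ := by
        apply mul_le_mul_of_nonneg_left hip' (by positivity)
    _ = δ * (a * b) := by ring

lemma exists_top {N : ℕ} (f : Fin N → ℝ) :
    ∀ (k : ℕ) (S : Finset (Fin N)), ∃ A, A ⊆ S ∧ A.card = min k S.card ∧
      ∀ i ∈ S \ A, ∀ i' ∈ A, f i ≤ f i' := by
  intro k
  induction k with
  | zero => intro S; exact ⟨∅, Finset.empty_subset _, by simp, by simp⟩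
  | succ k ih =>
      intro S
      rcases S.eq_empty_or_nonempty with rfl | hne
      · exact ⟨∅, Finset.empty_subset _, by simp, by simp⟩
      obtain ⟨i₀, hi₀S, hi₀max⟩ := Finset.exists_max_image S f hne
      obtain ⟨A', hA'sub, hA'card, hA'max⟩ := ih (S.erase i₀)
      refine ⟨insert i₀ A', ?_, ?_, ?_⟩
      · intro x hx
        rcases Finset.mem_insert.mp hx with rfl | hx'
        · exact hi₀S
        · exact Finset.erase_subset _ _ (hA'sub hx')
      · have hi₀A' : i₀ ∉ A' := fun h => (Finset.ne_of_mem_erase (hA'sub h)) rfl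
        rw [Finset.card_insert_of_notMem hi₀A', hA'card,
          Finset.card_erase_of_mem hi₀S]
        have h1 : 1 ≤ S.card := Finset.card_pos.mpr hne
        omega
      · intro i hi i' hi'
        have hiS : i ∈ S := (Finset.mem_sdiff.mp hi).1
        have hiA : i ∉ insert i₀ A' := (Finset.mem_sdiff.mp hi).2
        rcases Finset.mem_insert.mp hi' with rfl | hi'A'
        · exact hi₀max i hiS
        · apply hA'max i _ i' hi'A'
          rw [Finset.mem_sdiff]
          refine ⟨Finset.mem_erase.mpr ⟨?_, hiS⟩, ?_⟩
          · intro h; exact hiA (h ▸ Finset.mem_insert_self i₀ A')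
          · intro h; exact hiA (Finset.mem_insert_of_mem h)

lemma exists_blocks {N : ℕ} (f : Fin N → ℝ) (s : ℕ) (hs : 0 < s) (S : Finset (Fin N)) :
    ∃ (m : ℕ) (T : ℕ → Finset (Fin N)),
      (∀ j, T j ⊆ S) ∧
      (∀ j k, j ≠ k → Disjoint (T j) (T k)) ∧
      (∀ i ∈ S, ∃ j, j < m ∧ i ∈ T j) ∧
      (∀ j, (T j).card ≤ s) ∧
      (∀ j, (T (j+1)).Nonempty → (T j).card = s) ∧
      (∀ j, ∀ i ∈ T (j+1), ∀ i' ∈ T j, |f i| ≤ |f i'|) ∧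
      (∀ j, m ≤ j → T j = ∅) := by
  induction S using Finset.strongInduction with
  | _ S ih =>
    by_cases hS : S.card ≤ s
    · refine ⟨1, fun j => match j with | 0 => S | _+1 => ∅, ?_, ?_, ?_, ?_, ?_, ?_, ?_⟩
      · intro j; match j with
        | 0 => exact Finset.Subset.refl _
        | j+1 => exact Finset.empty_subset _
      · intro j k hjk
        match j, k with
        | 0, 0 => exact absurd rfl hjk
        | 0, k+1 => exact Finset.disjoint_empty_right _
        | j+1, k => exact Finset.disjoint_empty_left _
      · intro i hi; exact ⟨0, by omega, hi⟩
      · intro j; match j with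
        | 0 => exact hS
        | j+1 => simp [hs]
      · intro j h; exact absurd rfl h.ne_empty
      · intro j i hi; exact absurd hi (Finset.notMem_empty i)
      · intro j hj; match j, hj with
        | j+1, _ => rfl
    · push_neg at hS
      obtain ⟨A, hAsub, hAcard, hAmax⟩ := exists_top (fun i => |f i|) s S
      have hAcard' : A.card = s := by rw [hAcard]; omega
      have hAne : A.Nonempty := Finset.card_pos.mp (by omega)
      have hss : S \ A ⊂ S := Finset.sdiff_ssubset hAsub hAne
      obtain ⟨m', T', hsub', hdisj', hcover', hcard', hfull', hsort', htail'⟩ := ih (S \ A) hss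
      refine ⟨m' + 1, fun j => match j with | 0 => A | j+1 => T' j, ?_, ?_, ?_, ?_, ?_, ?_, ?_⟩
      · intro j; match j with
        | 0 => exact hAsub
        | j+1 => exact le_trans (hsub' j) (Finset.sdiff_subset)
      · intro j k hjk
        match j, k with
        | 0, 0 => exact absurd rfl hjk
        | 0, k+1 =>
            exact Finset.disjoint_right.mpr fun x hx => (Finset.mem_sdiff.mp (hsub' k hx)).2
        | j+1, 0 =>
            exact Finset.disjoint_left.mpr fun x hx => (Finset.mem_sdiff.mp (hsub' j hx)).2
        | j+1, k+1 => exact hdisj' j k (by omega)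
      · intro i hi
        by_cases hiA : i ∈ A
        · exact ⟨0, by omega, hiA⟩
        · obtain ⟨j, hjm, hij⟩ := hcover' i (Finset.mem_sdiff.mpr ⟨hi, hiA⟩)
          exact ⟨j + 1, by omega, hij⟩
      · intro j; match j with
        | 0 => exact le_of_eq hAcard'
        | j+1 => exact hcard' j
      · intro j hj
        match j with
        | 0 => exact hAcard'
        | j+1 => exact hfull' j hj
      · intro j i hi i' hi'
        match j with
        | 0 =>
            have : i ∈ S \ A := hsub' 0 hi
            exact hAmax i this i' hi'
        | j+1 => exact hsort' j i hi i' hi'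
      · intro j hj
        match j with
        | j+1 => exact htail' j (by omega)

end CSaux

namespace CSaux

variable {N : ℕ}

lemma restr_union (A B : Finset (Fin N)) (hd : Disjoint A B) (h : Fin N → ℝ) :
    restr (A ∪ B) h = restr A h + restr B h := by
  funext i
  simp only [restr, Pi.add_apply, Finset.mem_union]
  by_cases hA : i ∈ A
  · have hB : i ∉ B := Finset.disjoint_left.mp hd hA
    simp [hA, hB]
  · by_cases hB : i ∈ B <;> simp [hA, hB]

lemma ip_sub_right (x y z : Fin N → ℝ) : ip x (y - z) = ip x y - ip x z := by
  unfold ip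
  rw [← Finset.sum_sub_distrib]
  apply Finset.sum_congr rfl; intro i _; simp [Pi.sub_apply]; ring

lemma ip_sum_right (x : Fin N → ℝ) (m : ℕ) (f : ℕ → Fin N → ℝ) :
    ip x (∑ j ∈ Finset.range m, f j) = ∑ j ∈ Finset.range m, ip x (f j) := by
  induction m with
  | zero => unfold ip; simp
  | succ m ih =>
      rw [Finset.sum_range_succ, Finset.sum_range_succ, ← ih]
      unfold ip
      rw [← Finset.sum_add_distrib]
      apply Finset.sum_congr rfl; intro i _; simp [Pi.add_apply]; ring

lemma mulVec_sum {M : ℕ} (Φ : Matrix (Fin M) (Fin N) ℝ) (m : ℕ) (f : ℕ → Fin N → ℝ) :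
    Φ.mulVec (∑ j ∈ Finset.range m, f j) = ∑ j ∈ Finset.range m, Φ.mulVec (f j) := by
  induction m with
  | zero => simp [Matrix.mulVec_zero]
  | succ m ih => rw [Finset.sum_range_succ, Finset.sum_range_succ, Matrix.mulVec_add, ih]

lemma l2_restr_mono {A B : Finset (Fin N)} (hAB : A ⊆ B) (h : Fin N → ℝ) :
    l2 (restr A h) ≤ l2 (restr B h) := by
  have h1 : l2 (restr A h) ^ 2 ≤ l2 (restr B h) ^ 2 := by
    rw [l2_sq_restr, l2_sq_restr]
    exact Finset.sum_le_sum_of_subset_of_nonneg hAB (fun i _ _ => sq_nonneg _)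
  have := l2_nonneg (restr B h)
  nlinarith [l2_nonneg (restr A h)]

lemma l2_eq_sqrt_sq (v : Fin N → ℝ) : l2 v = Real.sqrt (l2 v ^ 2) :=
  (Real.sqrt_sq (l2_nonneg v)).symm

end CSaux

namespace CSaux
lemma le_of_sq_le' {a b : ℝ} (ha : 0 ≤ a) (hb : 0 ≤ b) (h : a^2 ≤ b^2) : a ≤ b := by
  have := Real.sqrt_le_sqrt h
  rwa [Real.sqrt_sq ha, Real.sqrt_sq hb] at this
end CSaux

set_option maxHeartbeats 2000000 in
open CSaux in
theorem stmt1 {M N s : ℕ} (Φ : Matrix (Fin M) (Fin N) ℝ) (y n : Fin M → ℝ)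
    (xtrue xstar : Fin N → ℝ) (ε δ : ℝ)
    (hy : y = Φ.mulVec xtrue + n) (hn : l2 n ≤ ε)
    (hbin : ∀ j, xtrue j = 0 ∨ xtrue j = 1)
    (hs : Set.ncard (Function.support xtrue) = s)
    (hδ : δ < Real.sqrt 2 - 1)
    (hBRIP : ∀ v : Fin N → ℝ, Set.ncard (Function.support v) ≤ 2 * s → (∀ i, |v i| ≤ 1) →
      (1 - δ) * (l2 v) ^ 2 ≤ (l2 (Φ.mulVec v)) ^ 2 ∧
      (l2 (Φ.mulVec v)) ^ 2 ≤ (1 + δ) * (l2 v) ^ 2)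
    (hfeas : l2 (Φ.mulVec xstar - y) ≤ ε ∧ ∀ j, 0 ≤ xstar j ∧ xstar j ≤ 1)
    (hopt : ∀ x : Fin N → ℝ, (l2 (Φ.mulVec x - y) ≤ ε ∧ ∀ j, 0 ≤ x j ∧ x j ≤ 1) →
      l1 xstar ≤ l1 x) :
    l2 (xstar - xtrue) ≤ (4 * Real.sqrt (1 + δ) / (1 - (Real.sqrt 2 + 1) * δ)) * ε := by
  classical
  have ε0 : 0 ≤ ε := le_trans (l2_nonneg n) hn
  have sqrt2_sq : Real.sqrt 2 * Real.sqrt 2 = 2 := Real.mul_self_sqrt (by norm_num)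
  have sqrt2_pos : (0:ℝ) < Real.sqrt 2 := Real.sqrt_pos.mpr (by norm_num)
  have hden : 0 < 1 - (Real.sqrt 2 + 1) * δ := by nlinarith
  have hRHS0 : 0 ≤ (4 * Real.sqrt (1 + δ) / (1 - (Real.sqrt 2 + 1) * δ)) * ε :=
    mul_nonneg (div_nonneg (by positivity) hden.le) ε0
  set h : Fin N → ℝ := xstar - xtrue with hhdef
  set T0 : Finset (Fin N) := Finset.univ.filter (fun j => xtrue j ≠ 0) with hT0def
  have hT0supp : Function.support xtrue = ↑T0 := by
    ext i; simp [hT0def, Function.mem_support]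
  have hT0card : T0.card = s := by rw [← hs, hT0supp, Set.ncard_coe_finset]
  have hxT0 : ∀ j ∈ T0, xtrue j = 1 := by
    intro j hj
    rcases hbin j with h0 | h1
    · exfalso; rw [hT0def] at hj; simp at hj; exact hj h0
    · exact h1
  have hxnT0 : ∀ j ∉ T0, xtrue j = 0 := by
    intro j hj
    by_contra hc
    exact hj (by rw [hT0def]; simp [hc])
  -- case s = 0
  rcases Nat.eq_zero_or_pos s with hs0 | hspos
  · subst hs0
    have hT0e : T0 = ∅ := Finset.card_eq_zero.mp hT0card
    have hxt0 : xtrue = 0 := by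
      funext j
      exact hxnT0 j (by rw [hT0e]; exact Finset.notMem_empty j)
    have hfeas0 : l2 (Φ.mulVec (0 : Fin N → ℝ) - y) ≤ ε := by
      have : Φ.mulVec (0 : Fin N → ℝ) - y = -n := by
        rw [hy, hxt0, Matrix.mulVec_zero]; ring
      rw [this, l2_neg]; exact hn
    have h0b : ∀ j : Fin N, 0 ≤ (0:Fin N → ℝ) j ∧ (0:Fin N → ℝ) j ≤ 1 := by
      intro j; norm_num
    have hl1 : l1 xstar ≤ 0 := by
      have := hopt 0 ⟨hfeas0, h0b⟩
      simpa [l1] using this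
    have hxstar0 : xstar = 0 := by
      funext j
      have h1 : ∀ i ∈ Finset.univ, (0:ℝ) ≤ |xstar i| := fun i _ => abs_nonneg _
      have h2 : ∑ i, |xstar i| = 0 := le_antisymm hl1 (Finset.sum_nonneg h1)
      have := (Finset.sum_eq_zero_iff_of_nonneg h1).mp h2 j (Finset.mem_univ j)
      exact abs_eq_zero.mp this
    have hh0 : h = 0 := by rw [hhdef, hxstar0, hxt0]; ring
    rw [hh0]
    have hl20 : l2 (0 : Fin N → ℝ) = 0 := by unfold l2; simp
    rw [hl20]; exact hRHS0
  -- s ≥ 1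
  have hspos' : (0:ℝ) < s := by exact_mod_cast hspos
  have sqrts_pos : (0:ℝ) < Real.sqrt s := Real.sqrt_pos.mpr hspos'
  have sqrts_sq : Real.sqrt s * Real.sqrt s = s := Real.mul_self_sqrt hspos'.le
  -- entry structure of h
  have hhT0 : ∀ j ∈ T0, |h j| = 1 - xstar j := by
    intro j hj
    have : h j = xstar j - 1 := by rw [hhdef]; simp [hxT0 j hj]
    rw [this, abs_of_nonpos (by linarith [(hfeas.2 j).2])]; ring
  have hhnT0 : ∀ j ∉ T0, |h j| = xstar j := by
    intro j hj
    have : h j = xstar j := by rw [hhdef]; simp [hxnT0 j hj]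
    rw [this, abs_of_nonneg (hfeas.2 j).1]
  have habs1 : ∀ i, |h i| ≤ 1 := by
    intro i
    by_cases hi : i ∈ T0
    · rw [hhT0 i hi]; linarith [(hfeas.2 i).1]
    · rw [hhnT0 i hi]; exact (hfeas.2 i).2
  -- cone condition
  have hfeastrue : l2 (Φ.mulVec xtrue - y) ≤ ε := by
    have : Φ.mulVec xtrue - y = -n := by rw [hy]; ring
    rw [this, l2_neg]; exact hn
  have hxtb : ∀ j : Fin N, 0 ≤ xtrue j ∧ xtrue j ≤ 1 := by
    intro j; rcases hbin j with h0 | h0 <;> rw [h0] <;> norm_num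
  have hl1true : l1 xtrue = (s:ℝ) := by
    unfold l1
    rw [← Finset.sum_subset (Finset.subset_univ T0)
      (fun i _ hi => by rw [hxnT0 i hi]; simp)]
    rw [← hT0card]
    rw [Finset.sum_congr rfl (fun i hi => by rw [hxT0 i hi, abs_one])]
    simp
  have hl1star : l1 xstar ≤ (s:ℝ) := by
    rw [← hl1true]; exact hopt xtrue ⟨hfeastrue, hxtb⟩
  have hcone : ∑ i ∈ T0ᶜ, |h i| ≤ ∑ i ∈ T0, |h i| := by
    have hA : ∑ i ∈ T0, |h i| = (s:ℝ) - ∑ i ∈ T0, xstar i := by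
      rw [Finset.sum_congr rfl hhT0, Finset.sum_sub_distrib, ← hT0card]; simp
    have hB : ∑ i ∈ T0ᶜ, |h i| = ∑ i ∈ T0ᶜ, xstar i := by
      apply Finset.sum_congr rfl
      intro i hi; exact hhnT0 i (Finset.mem_compl.mp hi)
    have hC : ∑ i ∈ T0, xstar i + ∑ i ∈ T0ᶜ, xstar i = l1 xstar := by
      rw [Finset.sum_add_sum_compl]
      unfold l1
      exact Finset.sum_congr rfl (fun i _ => (abs_of_nonneg (hfeas.2 i).1).symm)
    rw [hA, hB]; linarith
  -- tube constraint
  have hΦh : l2 (Φ.mulVec h) ≤ 2 * ε := by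
    have heq : Φ.mulVec h = (Φ.mulVec xstar - y) + n := by
      rw [hhdef, Matrix.mulVec_sub, hy]; ring
    rw [heq]
    calc l2 ((Φ.mulVec xstar - y) + n) ≤ l2 (Φ.mulVec xstar - y) + l2 n := l2_add_le _ _
      _ ≤ ε + ε := add_le_add hfeas.1 hn
      _ = 2 * ε := by ring
  -- blocks
  obtain ⟨m, T, hsub, hdisj, hcover, hcard, hfull, hsort, htail⟩ :=
    exists_blocks h s hspos T0ᶜ
  set g : ℕ → Fin N → ℝ := fun j => restr (T j) h with hgdef
  set a0 : Fin N → ℝ := restr T0 h with ha0def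
  set a01 : Fin N → ℝ := restr (T0 ∪ T 0) h with ha01def
  set α : ℝ := l2 a01 with hαdef
  set Stail : ℝ := ∑ j ∈ Finset.range m, l2 (g (j+1)) with hStaildef
  have hα0 : 0 ≤ α := l2_nonneg _
  have hdisj0 : ∀ j, Disjoint T0 (T j) := by
    intro j
    exact Finset.disjoint_left.mpr fun x hx hxj => (Finset.mem_compl.mp (hsub j hxj)) hx
  -- decomposition
  have hdecomp : h = a01 + ∑ j ∈ Finset.range m, g (j+1) := by
    funext i
    rw [Pi.add_apply, Finset.sum_apply]
    by_cases hi0 : i ∈ T0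
    · have h1 : a01 i = h i := by
        rw [ha01def, restr_apply, if_pos (Finset.mem_union_left _ hi0)]
      have h2 : ∀ j ∈ Finset.range m, g (j+1) i = 0 := by
        intro j _
        simp only [hgdef, restr_apply]
        rw [if_neg (fun hmem => Finset.disjoint_left.mp (hdisj0 (j+1)) hi0 hmem)]
      rw [h1, Finset.sum_congr rfl h2, Finset.sum_const_zero, add_zero]
    · obtain ⟨j0, hj0m, hij0⟩ := hcover i (Finset.mem_compl.mpr hi0)
      match j0, hj0m, hij0 with
      | 0, hj0m, hij0 =>
          have h1 : a01 i = h i := by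
            rw [ha01def, restr_apply, if_pos (Finset.mem_union_right _ hij0)]
          have h2 : ∀ j ∈ Finset.range m, g (j+1) i = 0 := by
            intro j _
            rw [hgdef]
            simp only [restr_apply]
            rw [if_neg (fun hmem =>
              Finset.disjoint_left.mp (hdisj (j+1) 0 (by omega)) hmem hij0)]
          rw [h1, Finset.sum_congr rfl h2, Finset.sum_const_zero, add_zero]
      | k+1, hj0m, hij0 =>
          have h1 : a01 i = 0 := by
            rw [ha01def, restr_apply, if_neg]
            intro hmem
            rcases Finset.mem_union.mp hmem with hA | hB
            · exact hi0 hA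
            · exact Finset.disjoint_left.mp (hdisj 0 (k+1) (by omega)) hB hij0
          have h2 : ∑ j ∈ Finset.range m, g (j+1) i = h i := by
            rw [Finset.sum_eq_single k]
            · simp only [hgdef, restr_apply]; rw [if_pos hij0]
            · intro j _ hjk
              simp only [hgdef, restr_apply]
              rw [if_neg (fun hmem =>
                Finset.disjoint_left.mp (hdisj (j+1) (k+1) (by omega)) hmem hij0)]
            · intro hk
              exfalso; exact hk (Finset.mem_range.mpr (by omega))
          rw [h1, h2, zero_add]
  -- splitting of α²
  have hsq_split : α ^ 2 = l2 a0 ^ 2 + l2 (g 0) ^ 2 := by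
    simp only [hαdef, ha01def, ha0def, hgdef]
    rw [l2_sq_restr, l2_sq_restr, l2_sq_restr, Finset.sum_union (hdisj0 0)]
  have ha0α : l2 a0 ≤ α := by
    rw [hαdef, ha01def, ha0def]
    exact l2_restr_mono Finset.subset_union_left h
  have hsum2 : l2 a0 + l2 (g 0) ≤ Real.sqrt 2 * α := by
    apply le_of_sq_le' (add_nonneg (l2_nonneg a0) (l2_nonneg (g 0)))
      (mul_nonneg sqrt2_pos.le hα0)
    nlinarith [sq_nonneg (l2 a0 - l2 (g 0)), hsq_split, sqrt2_sq]
  -- block tail bound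
  have hblock : ∀ j, l2 (g (j+1)) ≤ (∑ i ∈ T j, |h i|) / Real.sqrt s := by
    intro j
    rcases (T (j+1)).eq_empty_or_nonempty with he | hne
    · have : l2 (g (j+1)) = 0 := by
        have h1 : l2 (g (j+1)) ^ 2 = 0 := by
          simp only [hgdef]
          rw [l2_sq_restr, he]; simp
        nlinarith [l2_nonneg (g (j+1))]
      rw [this]
      positivity
    · have hcardfull : (T j).card = s := hfull j hne
      set c : ℝ := (∑ i ∈ T j, |h i|) / s with hcdef
      have hc0 : 0 ≤ c := by positivity
      have hkey : ∀ i ∈ T (j+1), |h i| ≤ c := by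
        intro i hi
        have h1 : ∀ i' ∈ T j, |h i| ≤ |h i'| := fun i' hi' => hsort j i hi i' hi'
        have h2 : (s:ℝ) * |h i| ≤ ∑ i' ∈ T j, |h i'| := by
          calc (s:ℝ) * |h i| = ∑ _i' ∈ T j, |h i| := by
                rw [Finset.sum_const, hcardfull]; ring
            _ ≤ ∑ i' ∈ T j, |h i'| := Finset.sum_le_sum h1
        rw [hcdef, le_div_iff₀ hspos']
        linarith
      have hsq : l2 (g (j+1)) ^ 2 ≤ (s:ℝ) * c ^ 2 := by
        simp only [hgdef]
        rw [l2_sq_restr]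
        calc ∑ i ∈ T (j+1), h i ^ 2 ≤ ∑ _i ∈ T (j+1), c ^ 2 := by
              apply Finset.sum_le_sum
              intro i hi
              have := hkey i hi
              nlinarith [abs_nonneg (h i), sq_abs (h i)]
          _ = (T (j+1)).card * c ^ 2 := by rw [Finset.sum_const]; ring
          _ ≤ (s:ℝ) * c ^ 2 := by
              apply mul_le_mul_of_nonneg_right _ (sq_nonneg c)
              exact_mod_cast hcard (j+1)
      have hrhs : (∑ i ∈ T j, |h i|) / Real.sqrt s = Real.sqrt s * c := by
        rw [hcdef, mul_div_assoc', div_eq_div_iff sqrts_pos.ne' hspos'.ne']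
        linear_combination (-(∑ i ∈ T j, |h i|)) * sqrts_sq
      rw [hrhs]
      have h3 : l2 (g (j+1)) ^ 2 ≤ (Real.sqrt s * c) ^ 2 := by
        rw [mul_pow]; nlinarith
      nlinarith [l2_nonneg (g (j+1)), mul_nonneg sqrts_pos.le hc0]
  -- partition sum over T0ᶜ
  have hpart : ∑ j ∈ Finset.range m, ∑ i ∈ T j, |h i| = ∑ i ∈ T0ᶜ, |h i| := by
    rw [← Finset.sum_biUnion]
    · congr 1
      ext i
      simp only [Finset.mem_biUnion, Finset.mem_range]
      constructor
      · rintro ⟨j, _, hij⟩; exact hsub j hij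
      · intro hi
        obtain ⟨j, hjm, hij⟩ := hcover i hi
        exact ⟨j, hjm, hij⟩
    · intro x hx y hy hxy
      exact hdisj x y hxy
  have hStail_le : Stail ≤ l2 a0 := by
    have h1 : Stail ≤ (∑ i ∈ T0ᶜ, |h i|) / Real.sqrt s := by
      rw [hStaildef, ← hpart, Finset.sum_div]
      exact Finset.sum_le_sum (fun j _ => hblock j)
    have h2 : (∑ i ∈ T0ᶜ, |h i|) / Real.sqrt s ≤ (∑ i ∈ T0, |h i|) / Real.sqrt s :=
      div_le_div_of_nonneg_right hcone sqrts_pos.le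
    have h3 : ∑ i ∈ T0, |h i| ≤ Real.sqrt s * l2 a0 := by
      have hCS := sum_mul_sq_le_sq_mul_sq T0 (fun _ => (1:ℝ)) (fun i => |h i|)
      simp only [one_pow, one_mul, mul_one, Finset.sum_const, nsmul_eq_mul] at hCS
      have hCS2 : (∑ i ∈ T0, |h i|) ^ 2 ≤ (s:ℝ) * l2 a0 ^ 2 := by
        rw [ha0def, l2_sq_restr]
        calc (∑ i ∈ T0, |h i|) ^ 2 ≤ (T0.card:ℝ) * ∑ i ∈ T0, |h i| ^ 2 := hCS
          _ = (s:ℝ) * ∑ i ∈ T0, h i ^ 2 := by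
              rw [hT0card]
              congr 1
              exact Finset.sum_congr rfl (fun i _ => sq_abs (h i))
      nlinarith [Finset.sum_nonneg (fun i (_ : i ∈ T0) => abs_nonneg (h i)),
        mul_nonneg sqrts_pos.le (l2_nonneg a0), l2_nonneg a0]
    calc Stail ≤ (∑ i ∈ T0ᶜ, |h i|) / Real.sqrt s := h1
      _ ≤ (∑ i ∈ T0, |h i|) / Real.sqrt s := h2
      _ ≤ Real.sqrt s * l2 a0 / Real.sqrt s :=
          div_le_div_of_nonneg_right h3 sqrts_pos.le
      _ = l2 a0 := by field_simp
  have hStail0 : 0 ≤ Stail := by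
    rw [hStaildef]
    exact Finset.sum_nonneg (fun j _ => l2_nonneg _)
  -- l2 h ≤ 2α
  have hl2h : l2 h ≤ 2 * α := by
    calc l2 h = l2 (a01 + ∑ j ∈ Finset.range m, g (j+1)) := by rw [← hdecomp]
      _ ≤ l2 a01 + l2 (∑ j ∈ Finset.range m, g (j+1)) := l2_add_le _ _
      _ ≤ α + Stail := by
          rw [hαdef, hStaildef]
          exact add_le_add (le_refl _) (l2_sum_le (fun j => g (j+1)))
      _ ≤ α + l2 a0 := add_le_add (le_refl α) hStail_le
      _ ≤ α + α := add_le_add (le_refl α) ha0α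
      _ = 2 * α := by ring
  -- BRIP on a01
  have ha01supp : Set.ncard (Function.support a01) ≤ 2 * s := by
    apply le_trans (supp_card_le (T0 ∪ T 0) a01 ?_)
    · calc (T0 ∪ T 0).card ≤ T0.card + (T 0).card := Finset.card_union_le _ _
        _ ≤ s + s := add_le_add (le_of_eq hT0card) (hcard 0)
        _ = 2 * s := by ring
    · intro i hi
      rw [ha01def, restr_apply, if_neg hi]
  have ha01abs : ∀ i, |a01 i| ≤ 1 := by
    intro i
    rw [ha01def, restr_apply]
    by_cases hi : i ∈ T0 ∪ T 0
    · rw [if_pos hi]; exact habs1 i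
    · rw [if_neg hi]; simp
  have B01 := hBRIP a01 ha01supp ha01abs
  -- case δ < 0
  rcases lt_or_ge δ 0 with hδneg | hδ0
  · have hα00 : α = 0 := by
      have e : (1 - δ) * α ^ 2 ≤ (1 + δ) * α ^ 2 := by
        rw [hαdef]; exact le_trans B01.1 B01.2
      have e2 : α ^ 2 ≤ 0 := by nlinarith
      have e3 : α ^ 2 = 0 := le_antisymm e2 (sq_nonneg α)
      exact pow_eq_zero_iff (by norm_num) |>.mp e3
    calc l2 (xstar - xtrue) = l2 h := by rw [hhdef]
      _ ≤ 2 * α := hl2h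
      _ = 0 := by rw [hα00]; ring
      _ ≤ _ := hRHS0
  -- main case: 0 ≤ δ
  have h1δ : (0:ℝ) ≤ 1 + δ := by linarith
  have hΦa01 : l2 (Φ.mulVec a01) ≤ Real.sqrt (1 + δ) * α := by
    have h1 : l2 (Φ.mulVec a01) ^ 2 ≤ (Real.sqrt (1+δ) * α) ^ 2 := by
      rw [mul_pow, Real.sq_sqrt h1δ]
      exact B01.2
    nlinarith [l2_nonneg (Φ.mulVec a01), mul_nonneg (Real.sqrt_nonneg (1+δ)) hα0]
  -- expansion
  have ha01split : a01 = a0 + g 0 := by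
    simp only [ha01def, ha0def, hgdef]
    rw [restr_union T0 (T 0) (hdisj0 0) h]
  have hexp : l2 (Φ.mulVec a01) ^ 2
      = ip (Φ.mulVec a01) (Φ.mulVec h)
        - ∑ j ∈ Finset.range m, ip (Φ.mulVec a01) (Φ.mulVec (g (j+1))) := by
    have hΦdecomp : Φ.mulVec h
        = Φ.mulVec a01 + ∑ j ∈ Finset.range m, Φ.mulVec (g (j+1)) := by
      rw [hdecomp, Matrix.mulVec_add, mulVec_sum]
    have h2 : ip (Φ.mulVec a01) (Φ.mulVec h)
        = l2 (Φ.mulVec a01) ^ 2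
          + ∑ j ∈ Finset.range m, ip (Φ.mulVec a01) (Φ.mulVec (g (j+1))) := by
      rw [hΦdecomp]
      have : ip (Φ.mulVec a01)
          (Φ.mulVec a01 + ∑ j ∈ Finset.range m, Φ.mulVec (g (j+1)))
          = ip (Φ.mulVec a01) (Φ.mulVec a01)
            + ip (Φ.mulVec a01) (∑ j ∈ Finset.range m, Φ.mulVec (g (j+1))) := by
        unfold ip
        rw [← Finset.sum_add_distrib]
        apply Finset.sum_congr rfl; intro i _
        rw [Pi.add_apply]; ring
      rw [this, ip_self, ip_sum_right]
    linarith
  -- cross bounds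
  have hcross : ∀ j, |ip (Φ.mulVec a01) (Φ.mulVec (g (j+1)))|
      ≤ δ * ((l2 a0 + l2 (g 0)) * l2 (g (j+1))) := by
    intro j
    have hsplit : ip (Φ.mulVec a01) (Φ.mulVec (g (j+1)))
        = ip (Φ.mulVec a0) (Φ.mulVec (g (j+1)))
          + ip (Φ.mulVec (g 0)) (Φ.mulVec (g (j+1))) := by
      rw [ha01split, Matrix.mulVec_add]
      unfold ip
      rw [← Finset.sum_add_distrib]
      apply Finset.sum_congr rfl; intro i _
      rw [Pi.add_apply]; ring
    have hb1 : |ip (Φ.mulVec a0) (Φ.mulVec (g (j+1)))| ≤ δ * (l2 a0 * l2 (g (j+1))) := by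
      apply ro Φ δ hBRIP T0 (T (j+1)) (hdisj0 (j+1))
      · calc T0.card + (T (j+1)).card ≤ s + s := add_le_add (le_of_eq hT0card) (hcard (j+1))
          _ = 2 * s := by ring
      · intro i hi; rw [ha0def, restr_apply, if_neg hi]
      · intro i hi; simp only [hgdef, restr_apply]; rw [if_neg hi]
    have hb2 : |ip (Φ.mulVec (g 0)) (Φ.mulVec (g (j+1)))|
        ≤ δ * (l2 (g 0) * l2 (g (j+1))) := by
      apply ro Φ δ hBRIP (T 0) (T (j+1)) (hdisj 0 (j+1) (by omega))
      · calc (T 0).card + (T (j+1)).card ≤ s + s := add_le_add (hcard 0) (hcard (j+1))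
          _ = 2 * s := by ring
      · intro i hi; simp only [hgdef, restr_apply]; rw [if_neg hi]
      · intro i hi; simp only [hgdef, restr_apply]; rw [if_neg hi]
    calc |ip (Φ.mulVec a01) (Φ.mulVec (g (j+1)))|
        ≤ |ip (Φ.mulVec a0) (Φ.mulVec (g (j+1)))|
          + |ip (Φ.mulVec (g 0)) (Φ.mulVec (g (j+1)))| := by
          rw [hsplit]; exact abs_add_le _ _
      _ ≤ δ * (l2 a0 * l2 (g (j+1))) + δ * (l2 (g 0) * l2 (g (j+1))) := add_le_add hb1 hb2
      _ = δ * ((l2 a0 + l2 (g 0)) * l2 (g (j+1))) := by ring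
  -- assemble the key inequality
  have hsum_cross : ∑ j ∈ Finset.range m, |ip (Φ.mulVec a01) (Φ.mulVec (g (j+1)))|
      ≤ δ * ((l2 a0 + l2 (g 0)) * Stail) := by
    calc ∑ j ∈ Finset.range m, |ip (Φ.mulVec a01) (Φ.mulVec (g (j+1)))|
        ≤ ∑ j ∈ Finset.range m, δ * ((l2 a0 + l2 (g 0)) * l2 (g (j+1))) :=
          Finset.sum_le_sum (fun j _ => hcross j)
      _ = δ * ((l2 a0 + l2 (g 0)) * Stail) := by
          simp only [hStaildef, Finset.mul_sum]
          try (apply Finset.sum_congr rfl; intro j _; ring)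
  have hkey : (1 - δ) * α ^ 2
      ≤ 2 * ε * (Real.sqrt (1 + δ) * α) + δ * (Real.sqrt 2 * α) * α := by
    have e1 : (1 - δ) * α ^ 2 ≤ l2 (Φ.mulVec a01) ^ 2 := B01.1
    have e2 : ip (Φ.mulVec a01) (Φ.mulVec h) ≤ (Real.sqrt (1+δ) * α) * (2 * ε) := by
      calc ip (Φ.mulVec a01) (Φ.mulVec h) ≤ l2 (Φ.mulVec a01) * l2 (Φ.mulVec h) :=
            ip_le _ _
        _ ≤ (Real.sqrt (1+δ) * α) * (2 * ε) := by
            apply mul_le_mul hΦa01 hΦh (l2_nonneg _)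
            exact mul_nonneg (Real.sqrt_nonneg _) hα0
    have e3 : - ∑ j ∈ Finset.range m, ip (Φ.mulVec a01) (Φ.mulVec (g (j+1)))
        ≤ δ * ((l2 a0 + l2 (g 0)) * Stail) := by
      calc - ∑ j ∈ Finset.range m, ip (Φ.mulVec a01) (Φ.mulVec (g (j+1)))
          ≤ ∑ j ∈ Finset.range m, |ip (Φ.mulVec a01) (Φ.mulVec (g (j+1)))| := by
            rw [← Finset.sum_neg_distrib]
            exact Finset.sum_le_sum (fun j _ => neg_le_abs _)
        _ ≤ δ * ((l2 a0 + l2 (g 0)) * Stail) := hsum_cross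
    have e4 : δ * ((l2 a0 + l2 (g 0)) * Stail) ≤ δ * (Real.sqrt 2 * α) * α := by
      have h1 : (l2 a0 + l2 (g 0)) * Stail ≤ (Real.sqrt 2 * α) * α := by
        apply mul_le_mul hsum2 (le_trans hStail_le ha0α) hStail0
        exact mul_nonneg sqrt2_pos.le hα0
      calc δ * ((l2 a0 + l2 (g 0)) * Stail) ≤ δ * ((Real.sqrt 2 * α) * α) :=
            mul_le_mul_of_nonneg_left h1 hδ0
        _ = δ * (Real.sqrt 2 * α) * α := by ring
    have := hexp
    nlinarith
  -- conclude α bound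
  have hαbound : (1 - (Real.sqrt 2 + 1) * δ) * α ≤ 2 * Real.sqrt (1 + δ) * ε := by
    rcases eq_or_lt_of_le hα0 with hz | hpos
    · rw [← hz]
      have : (0:ℝ) ≤ 2 * Real.sqrt (1+δ) * ε := by positivity
      simpa using this
    · have h1 : (1 - (Real.sqrt 2 + 1) * δ) * α * α ≤ 2 * Real.sqrt (1 + δ) * ε * α := by
        nlinarith
      exact le_of_mul_le_mul_right h1 hpos
  have hαfinal : α ≤ 2 * Real.sqrt (1 + δ) * ε / (1 - (Real.sqrt 2 + 1) * δ) := by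
    rw [le_div_iff₀ hden]
    calc α * (1 - (Real.sqrt 2 + 1) * δ) = (1 - (Real.sqrt 2 + 1) * δ) * α := by ring
      _ ≤ 2 * Real.sqrt (1 + δ) * ε := hαbound
  calc l2 (xstar - xtrue) = l2 h := by rw [hhdef]
    _ ≤ 2 * α := hl2h
    _ ≤ 2 * (2 * Real.sqrt (1 + δ) * ε / (1 - (Real.sqrt 2 + 1) * δ)) := by linarith
    _ = (4 * Real.sqrt (1 + δ) / (1 - (Real.sqrt 2 + 1) * δ)) * ε := by
        field_simp; ring
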